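/- Let p be a prime, let A be a commutative ring of characteristic p (an algebra over 𝔽_p = ZMod p), and let r ≥ 0. Define a map F^r d : W_{r+1}(A) → Ω¹_{A/𝔽_p} from truncated Witt vectors of length r+1 to the module of Kähler differentials by F^r d(f) = Σ_{i=0}^{r} f_i^{p^{r−i}−1} · d(f_i), where f_0, …, f_r are the Witt components of f and d is the universal derivation. Then F^r d is additive: F^r d(f + g) = F^r d(f) + F^r d(g) for all f, g ∈ W_{r+1}(A). -/

import Mathlib

open MvPolynomial Finset

namespace FrDAux

variable (p : ℕ) [Fact p.Prime]

local notation "R" => MvPolynomial (Fin 2 × ℕ) ℤ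

lemma D_aeval_witt (s : ℕ → MvPolynomial (Fin 2 × ℕ) ℤ) (n : ℕ) :
    KaehlerDifferential.D ℤ R (aeval s (wittPolynomial p ℤ n)) =
      ((p : R) ^ n) • ∑ i ∈ range (n + 1),
        s i ^ (p ^ (n - i) - 1) • KaehlerDifferential.D ℤ R (s i) := by
  rw [aeval_wittPolynomial, map_sum, Finset.smul_sum]
  refine Finset.sum_congr rfl fun i hi => ?_
  rw [Finset.mem_range, Nat.lt_succ_iff] at hi
  have h1 : KaehlerDifferential.D ℤ R ((p : R) ^ i) = 0 := by
    have : ((p : R) ^ i) = algebraMap ℤ R ((p : ℤ) ^ i) := by push_cast; ring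
    rw [this, Derivation.map_algebraMap]
  rw [Derivation.leibniz, Derivation.leibniz_pow, h1, smul_zero, add_zero,
    ← Nat.cast_smul_eq_nsmul (MvPolynomial (Fin 2 × ℕ) ℤ), smul_smul, smul_smul, smul_smul]
  congr 1
  push_cast
  rw [← pow_add, Nat.add_sub_cancel' hi]

lemma witt_poly_identity (n : ℕ) :
    (∑ i ∈ range (n + 1), (WittVector.wittAdd p i) ^ (p ^ (n - i) - 1) •
        KaehlerDifferential.D ℤ R (WittVector.wittAdd p i)) =
      (∑ i ∈ range (n + 1), (X (0, i) : R) ^ (p ^ (n - i) - 1) •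
        KaehlerDifferential.D ℤ R (X (0, i))) +
      (∑ i ∈ range (n + 1), (X (1, i) : R) ^ (p ^ (n - i) - 1) •
        KaehlerDifferential.D ℤ R (X (1, i))) := by
  haveI := (KaehlerDifferential.mvPolynomialBasis ℤ (Fin 2 × ℕ)).isTorsionFree
  have hp : ((p : R) ^ n) ≠ 0 := by
    apply pow_ne_zero
    intro h
    exact (Fact.out : p.Prime).ne_zero (by simpa using h)
  apply smul_right_injective _ hp
  have key : aeval (WittVector.wittAdd p) (wittPolynomial p ℤ n)
      = aeval (fun i => (X (0, i) : R)) (wittPolynomial p ℤ n)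
        + aeval (fun i => (X (1, i) : R)) (wittPolynomial p ℤ n) := by
    have h := wittStructureInt_prop p (X 0 + X 1 : MvPolynomial (Fin 2) ℤ) n
    simp only [map_add, bind₁_X_right] at h
    have h0 : ∀ b : Fin 2, rename (Prod.mk b) (wittPolynomial p ℤ n)
        = aeval (fun i => (X (b, i) : R)) (wittPolynomial p ℤ n) := by
      intro b
      rw [rename_eq_aeval]
      rfl
    rw [h0 0, h0 1] at h
    exact h
  have := congrArg (KaehlerDifferential.D ℤ R) key
  rw [map_add, D_aeval_witt, D_aeval_witt, D_aeval_witt, ← smul_add] at this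
  simpa using this

lemma witt_key (A : Type*) [CommRing A] [Algebra (ZMod p) A]
    (x y : WittVector p A) (n : ℕ) :
    (∑ i ∈ range (n + 1), (x + y).coeff i ^ (p ^ (n - i) - 1) •
        KaehlerDifferential.D (ZMod p) A ((x + y).coeff i)) =
      (∑ i ∈ range (n + 1), x.coeff i ^ (p ^ (n - i) - 1) •
        KaehlerDifferential.D (ZMod p) A (x.coeff i)) +
      (∑ i ∈ range (n + 1), y.coeff i ^ (p ^ (n - i) - 1) •
        KaehlerDifferential.D (ZMod p) A (y.coeff i)) := by
  classical
  set φ : MvPolynomial (Fin 2 × ℕ) ℤ →ₐ[ℤ] A :=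
    aeval (Function.uncurry ![x.coeff, y.coeff]) with hφ
  letI : Algebra R A := φ.toRingHom.toAlgebra
  have halg : ∀ q : MvPolynomial (Fin 2 × ℕ) ℤ, algebraMap R A q = φ q := fun _ => rfl
  haveI : IsScalarTower ℤ R A := IsScalarTower.of_algebraMap_eq (fun c => by
    simp [halg, Algebra.algebraMap_eq_smul_one])
  haveI : SMulCommClass (ZMod p) R A := ⟨fun z r a => by
    show z • (φ r * a) = φ r * (z • a)
    rw [Algebra.smul_def, Algebra.smul_def]; ring⟩
  haveI : IsScalarTower ℤ (ZMod p) A := IsScalarTower.of_algebraMap_eq (fun c => by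
    simp)
  have hmap := congrArg (KaehlerDifferential.map ℤ (ZMod p) R A) (witt_poly_identity p n)
  rw [map_add, map_sum, map_sum, map_sum] at hmap
  have hterm : ∀ (q : MvPolynomial (Fin 2 × ℕ) ℤ) (e : ℕ),
      KaehlerDifferential.map ℤ (ZMod p) R A
        (q ^ e • KaehlerDifferential.D ℤ R q)
      = (φ q) ^ e • KaehlerDifferential.D (ZMod p) A (φ q) := by
    intro q e
    rw [LinearMap.map_smul, KaehlerDifferential.map_D, halg,
      ← algebraMap_smul A (q ^ e), halg, map_pow]
  simp only [hterm] at hmap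
  have hX : ∀ (b : Fin 2) (i : ℕ), φ (X (b, i)) = ![x.coeff, y.coeff] b i := by
    intro b i
    simp [hφ, Function.uncurry]
  have hadd : ∀ i : ℕ, φ (WittVector.wittAdd p i) = (x + y).coeff i := by
    intro i
    rw [WittVector.add_coeff]
    rfl
  simp only [hadd, hX] at hmap
  simpa using hmap

end FrDAux

/-- The de Rham–Witt map `F^r d : W_{r+1}(A) → Ω¹_{A/𝔽_p}`,
`f ↦ ∑_{i=0}^{r} f_i ^ (p^{r-i} - 1) • d f_i`. -/
noncomputable def FrD (p : ℕ) [Fact p.Prime] (A : Type*) [CommRing A] [Algebra (ZMod p) A]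
    (r : ℕ) (f : TruncatedWittVector p (r + 1) A) : KaehlerDifferential (ZMod p) A :=
  ∑ i : Fin (r + 1),
    TruncatedWittVector.coeff i f ^ (p ^ (r - (i : ℕ)) - 1) •
      KaehlerDifferential.D (ZMod p) A (TruncatedWittVector.coeff i f)

/-- **Additivity of `F^r d`.** Let `A` be a commutative ring of characteristic `p` (an algebra
over `𝔽_p`). The map `F^r d : W_{r+1}(A) → Ω¹_{A/𝔽_p}` given by
`f ↦ ∑_i f_i ^ (p^{r-i} - 1) • d f_i` (where `f_i` are the Witt components) is additive. -/
theorem FrD_add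
    (p : ℕ) [Fact p.Prime] (A : Type*) [CommRing A] [Algebra (ZMod p) A] [CharP A p]
    (r : ℕ) (f g : TruncatedWittVector p (r + 1) A) :
    FrD p A r (f + g) = FrD p A r f + FrD p A r g := by
  obtain ⟨x, rfl⟩ := WittVector.truncate_surjective p (r + 1) A f
  obtain ⟨y, rfl⟩ := WittVector.truncate_surjective p (r + 1) A g
  have h : ∀ z : WittVector p A, FrD p A r (WittVector.truncate (r + 1) z)
      = ∑ i ∈ Finset.range (r + 1), z.coeff i ^ (p ^ (r - i) - 1) •
          KaehlerDifferential.D (ZMod p) A (z.coeff i) := by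
    intro z
    have : FrD p A r (WittVector.truncate (r + 1) z)
        = ∑ i : Fin (r + 1), z.coeff (i : ℕ) ^ (p ^ (r - (i : ℕ)) - 1) •
            KaehlerDifferential.D (ZMod p) A (z.coeff (i : ℕ)) := by
      unfold FrD
      simp [WittVector.coeff_truncate]
    rw [this]
    exact Fin.sum_univ_eq_sum_range (fun i => z.coeff i ^ (p ^ (r - i) - 1) •
      KaehlerDifferential.D (ZMod p) A (z.coeff i)) (r + 1)
  rw [← map_add, h, h, h]
  exact FrDAux.witt_key p A x y r
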